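/- Let r ≥ 1, let a_0,…,a_{r−1} be complex numbers, and let n = (n_0,…,n_{r−1}) ∈ ℕ^r. With the raising operators (Φ_{a_ℓ} f)(x) = x·f(x−1) − a_ℓ·f(x) acting on functions ℂ → ℂ, the function obtained by applying Φ_{a_0} n_0 times, then Φ_{a_1} n_1 times, …, then Φ_{a_{r−1}} n_{r−1} times (in any order, composed) to the constant function 1 is, for every x ∈ ℂ, equal to C^a_n(x) = Σ_{k_0=0}^{n_0}⋯Σ_{k_{r−1}=0}^{n_{r−1}} (Π_{ℓ=0}^{r−1} binom(n_ℓ,k_ℓ)·(−a_ℓ)^{n_ℓ−k_ℓ})·(−1)^{|k|}·(−x)_{|k|}, where |k| = k_0+⋯+k_{r−1} and (y)_m = y(y+1)⋯(y+m−1) is the rising Pochhammer symbol. -/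

import Mathlib

/-- The rising Pochhammer symbol `(y)_m = y(y+1)⋯(y+m-1)`. -/
noncomputable def poch (y : ℂ) (m : ℕ) : ℂ := ∏ i ∈ Finset.range m, (y + i)

/-- The Charlier raising operator `(Φ_a f)(x) = x·f(x-1) - a·f(x)`. -/
def PhiOp (a : ℂ) (f : ℂ → ℂ) : ℂ → ℂ := fun x => x * f (x - 1) - a * f x

/-- The explicit type II Charlier--Angelesco polynomial (as a function of `x = z^r`). -/
noncomputable def charlierAngelesco (r : ℕ) (a : Fin r → ℂ) (n : Fin r → ℕ) (x : ℂ) : ℂ :=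
  ∑ k ∈ Fintype.piFinset (fun i : Fin r => Finset.range (n i + 1)),
    (∏ ℓ : Fin r, ((n ℓ).choose (k ℓ) : ℂ) * (-(a ℓ)) ^ (n ℓ - k ℓ)) *
      (-1) ^ (∑ i, k i) * poch (-x) (∑ i, k i)

/-- Falling-factorial basis `e m x = x(x-1)⋯(x-m+1)`. -/
noncomputable def eBase (m : ℕ) (x : ℂ) : ℂ := (-1) ^ m * poch (-x) m

lemma eBase_zero (x : ℂ) : eBase 0 x = 1 := by simp [eBase, poch]

lemma eBase_succ (m : ℕ) (x : ℂ) : x * eBase m (x - 1) = eBase (m + 1) x := by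
  simp only [eBase, poch]
  rw [Finset.prod_range_succ']
  have h : (∏ i ∈ Finset.range m, (-x + ((i + 1 : ℕ) : ℂ)))
      = ∏ i ∈ Finset.range m, (-(x - 1) + (i : ℂ)) :=
    Finset.prod_congr rfl fun i _ => by push_cast; ring
  rw [h]
  push_cast
  ring

/-- Key lemma: iterating `PhiOp a` on a finite `eBase`-combination. -/
lemma PhiOp_iter {ι : Type*} (a : ℂ) (N : ℕ) (s : Finset ι) (c : ι → ℂ) (d : ι → ℕ)
    (f : ℂ → ℂ) (hf : ∀ x, f x = ∑ j ∈ s, c j * eBase (d j) x) (x : ℂ) :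
    (PhiOp a)^[N] f x
      = ∑ j ∈ s, ∑ k ∈ Finset.range (N + 1),
          c j * ((N.choose k : ℂ) * (-a) ^ (N - k)) * eBase (d j + k) x := by
  induction N generalizing x with
  | zero => simp [hf x]
  | succ N ih =>
    rw [Function.iterate_succ_apply']
    simp only [PhiOp]
    rw [ih, ih]
    have expand : ∀ y : ℂ, ∀ j ∈ s,
        ∑ k ∈ Finset.range (N + 1), c j * ((N.choose k : ℂ) * (-a) ^ (N - k)) * eBase (d j + k) y
        = ∑ k ∈ Finset.range (N + 1), c j * ((N.choose k : ℂ) * (-a) ^ (N - k)) * eBase (d j + k) y :=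
      fun _ _ _ => rfl
    rw [Finset.mul_sum, Finset.mul_sum, ← Finset.sum_sub_distrib]
    refine Finset.sum_congr rfl fun j _ => ?_
    rw [Finset.mul_sum, Finset.mul_sum, ← Finset.sum_sub_distrib]
    -- LHS: ∑_{k≤N} coef k * (x * e_{d j + k}(x-1) - a * e_{d j + k}(x))
    --     = ∑_{k≤N} coef k * (e_{d j + k + 1}(x) - a e_{d j + k}(x))
    have step : ∀ k, x * (c j * ((N.choose k : ℂ) * (-a) ^ (N - k)) * eBase (d j + k) (x - 1))
        - a * (c j * ((N.choose k : ℂ) * (-a) ^ (N - k)) * eBase (d j + k) x)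
        = c j * ((N.choose k : ℂ) * (-a) ^ (N - k)) * eBase (d j + k + 1) x
          + c j * ((N.choose k : ℂ) * (-a) ^ (N - k + 1)) * eBase (d j + k) x := by
      intro k
      rw [← eBase_succ (d j + k) x, pow_succ]
      ring
    rw [Finset.sum_congr rfl (fun k _ => step k), Finset.sum_add_distrib]
    -- Goal: S1 + S2 = T.  Expand T via Pascal.
    rw [Finset.sum_range_succ'
      (fun k => c j * (((N+1).choose k : ℂ) * (-a) ^ (N + 1 - k)) * eBase (d j + k) x) (N+1)]
    have hL : ∀ k ∈ Finset.range (N+1),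
        c j * (((N+1).choose (k+1) : ℂ) * (-a) ^ (N + 1 - (k+1))) * eBase (d j + (k+1)) x
        = c j * ((N.choose k : ℂ) * (-a) ^ (N - k)) * eBase (d j + k + 1) x
          + c j * ((N.choose (k+1) : ℂ) * (-a) ^ (N - k)) * eBase (d j + k + 1) x := by
      intro k hk; rw [Finset.mem_range] at hk
      rw [show N + 1 - (k+1) = N - k from by omega, Nat.choose_succ_succ,
        show d j + (k+1) = d j + k + 1 from rfl]
      push_cast; ring
    rw [Finset.sum_congr rfl hL, Finset.sum_add_distrib]
    rw [Finset.sum_range_succ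
      (fun k => c j * ((N.choose (k+1) : ℂ) * (-a) ^ (N - k)) * eBase (d j + k + 1) x) N]
    rw [Finset.sum_range_succ'
      (fun k => c j * ((N.choose k : ℂ) * (-a) ^ (N - k + 1)) * eBase (d j + k) x) N]
    have hR : ∀ k ∈ Finset.range N,
        c j * ((N.choose (k+1) : ℂ) * (-a) ^ (N - (k+1) + 1)) * eBase (d j + (k+1)) x
        = c j * ((N.choose (k+1) : ℂ) * (-a) ^ (N - k)) * eBase (d j + k + 1) x := by
      intro k hk; rw [Finset.mem_range] at hk
      rw [show N - (k+1) + 1 = N - k from by omega, show d j + (k+1) = d j + k + 1 from rfl]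
    rw [Finset.sum_congr rfl hR]
    simp only [Nat.choose_succ_self, Nat.choose_zero_right, Nat.sub_zero, Nat.cast_zero,
      Nat.cast_one, Nat.add_zero, add_zero]
    push_cast
    ring

theorem charlier_rodrigues_explicit (r : ℕ) (hr : 1 ≤ r) (a : Fin r → ℂ)
    (n : Fin r → ℕ) (x : ℂ) :
    ((List.finRange r).foldr (fun i g => (PhiOp (a i))^[n i] ∘ g) id) (fun _ => 1) x
      = charlierAngelesco r a n x := by
  clear hr
  induction r generalizing x with
  | zero => simp [charlierAngelesco, poch]
  | succ r ih =>
    rw [List.finRange_succ, List.foldr_cons, List.foldr_map]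
    have hF : ∀ y : ℂ,
        ((List.finRange r).foldr (fun i g => (PhiOp ((a ∘ Fin.succ) i))^[(n ∘ Fin.succ) i] ∘ g) id)
          (fun _ => 1) y
        = ∑ k ∈ Fintype.piFinset (fun i : Fin r => Finset.range (n i.succ + 1)),
            (∏ ℓ : Fin r, ((n ℓ.succ).choose (k ℓ) : ℂ) * (-(a ℓ.succ)) ^ (n ℓ.succ - k ℓ))
              * eBase (∑ i, k i) y := by
      intro y
      rw [ih (a ∘ Fin.succ) (n ∘ Fin.succ) y]
      unfold charlierAngelesco eBase
      exact Finset.sum_congr rfl fun k _ => by simp [Function.comp]; ring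
    have key := PhiOp_iter (a 0) (n 0)
      (Fintype.piFinset (fun i : Fin r => Finset.range (n i.succ + 1)))
      (fun k => ∏ ℓ : Fin r, ((n ℓ.succ).choose (k ℓ) : ℂ) * (-(a ℓ.succ)) ^ (n ℓ.succ - k ℓ))
      (fun k => ∑ i, k i) _ hF x
    simp only [Function.comp_apply] at key ⊢
    rw [key]
    -- Now reindex the RHS.
    unfold charlierAngelesco
    rw [← Finset.sum_product']
    symm
    refine (Finset.sum_nbij' (i := fun (K : Fin (r+1) → ℕ) => (Fin.tail K, K 0))
      (j := fun (p : (Fin r → ℕ) × ℕ) => (Fin.cons p.2 p.1 : Fin (r+1) → ℕ))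
      ?_ ?_ ?_ ?_ ?_)
    · intro K hK
      simp only [Fintype.mem_piFinset] at hK
      rw [Finset.mem_product, Fintype.mem_piFinset]
      exact ⟨fun i => by simpa [Fin.tail] using hK i.succ, by simpa using hK 0⟩
    · intro p hp
      simp only [Finset.mem_product, Fintype.mem_piFinset] at hp
      rw [Fintype.mem_piFinset]
      intro i
      induction i using Fin.cases with
      | zero => simpa using hp.2
      | succ i => simpa using hp.1 i
    · intro K _; exact Fin.cons_self_tail K
    · intro p _; simp [Fin.tail_cons]
    · intro K hK
      simp only [Fintype.mem_piFinset] at hK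
      rw [Fin.prod_univ_succ, Fin.sum_univ_succ]
      have hsum : K 0 + ∑ i : Fin r, K i.succ = (∑ i : Fin r, Fin.tail K i) + K 0 := by
        simp [Fin.tail]; ring
      rw [hsum, eBase]
      simp only [Fin.tail]
      push_cast
      ring
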